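/- arXiv:2602.19867 — 3 statements merged into one kernel-verified Lean document; each statement's English description precedes it below -/
import Mathlib

section
/- Let P ∈ ℝ^{n×n} be symmetric positive semidefinite. Then for every e ∈ ℝ^n and every v ∈ ℝ^m with ‖v‖_∞ ≤ 1, f(e, v)^⊤ P f(e, v) ≤ max over all subsets 𝒥 ⊆ {1, …, m} of e^⊤ A_K(𝒥)^⊤ P A_K(𝒥) e. -/
open Matrix

/-- The scalar saturation function `sat(x) = sign(x) · min(|x|, 1)`
(saturation bounds normalized to 1). -/
noncomputable def sat (x : ℝ) : ℝ := Real.sign x * min |x| 1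

/-- The componentwise saturation function `φ : ℝ^m → ℝ^m`. -/
noncomputable def satVec {m : ℕ} (u : Fin m → ℝ) : Fin m → ℝ := fun j => sat (u j)

/-- The saturated error dynamics `f(e, v) = A e + B (φ(K e + v) − v)`. -/
noncomputable def errDyn {n m : ℕ} (A : Matrix (Fin n) (Fin n) ℝ)
    (B : Matrix (Fin n) (Fin m) ℝ) (K : Matrix (Fin m) (Fin n) ℝ)
    (e : Fin n → ℝ) (v : Fin m → ℝ) : Fin n → ℝ :=
  A.mulVec e + B.mulVec (satVec (K.mulVec e + v) - v)

/-- `A_K(𝒥) = A + Σ_{j ∈ 𝒥} B_{(j)} K_j`. -/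
noncomputable def AK {n m : ℕ} (A : Matrix (Fin n) (Fin n) ℝ)
    (B : Matrix (Fin n) (Fin m) ℝ) (K : Matrix (Fin m) (Fin n) ℝ)
    (J : Finset (Fin m)) : Matrix (Fin n) (Fin n) ℝ :=
  A + ∑ j ∈ J, Matrix.vecMulVec (fun i => B i j) (K j)


lemma sat_eq (x : ℝ) : (Real.sign x * min |x| 1) = max (-1) (min x 1) := by
  rcases lt_trichotomy x 0 with h | h | h
  · rw [Real.sign_of_neg h, abs_of_neg h]
    rcases le_or_gt (-1) x with h1 | h1
    · rw [min_eq_left (by linarith), min_eq_left (by linarith), max_eq_right h1]; ring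
    · rw [min_eq_right (by linarith), min_eq_left (by linarith), max_eq_left (by linarith)]; ring
  · simp [h]
  · rw [Real.sign_of_pos h, abs_of_pos h, one_mul, max_eq_right]
    exact le_trans (by norm_num) (le_min (by linarith) (by norm_num) : (-1:ℝ) ≤ min x 1)

lemma sat_theta (u v : ℝ) (hv : |v| ≤ 1) :
    ∃ θ : ℝ, 0 ≤ θ ∧ θ ≤ 1 ∧ max (-1) (min (u + v) 1) - v = θ * u := by
  obtain ⟨hv1, hv2⟩ := abs_le.mp hv
  set d := max (-1) (min (u + v) 1) - v with hd
  rcases lt_trichotomy u 0 with h | h | h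
  · have h1 : u ≤ d := by
      simp only [hd]
      rcases le_or_gt (u + v) (-1) with h2 | h2
      · rw [min_eq_left (by linarith), max_eq_left (by linarith)]; linarith
      · rw [max_eq_right (le_min (by linarith) (by linarith))]
        rcases le_total (u+v) 1 with h3 | h3
        · rw [min_eq_left h3]; linarith
        · rw [min_eq_right h3]; linarith
    have h2 : d ≤ 0 := by
      simp only [hd]
      rcases le_total (u+v) 1 with h3 | h3
      · have : min (u+v) 1 = u + v := min_eq_left h3
        rw [this]; rcases le_total (-1) (u+v) with h4 | h4
        · rw [max_eq_right h4]; linarith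
        · rw [max_eq_left h4]; linarith
      · linarith
    refine ⟨d / u, div_nonneg_of_nonpos h2 h.le, by rw [div_le_one_iff]; tauto, ?_⟩
    rw [div_mul_cancel₀ _ (ne_of_lt h)]
  · refine ⟨0, le_refl 0, by norm_num, ?_⟩
    simp only [hd, h, zero_add, zero_mul]
    rw [min_eq_left hv2, max_eq_right hv1]; ring
  · have h1 : 0 ≤ d := by
      simp only [hd]
      rcases le_total (u+v) 1 with h3 | h3
      · rw [min_eq_left h3, max_eq_right (by linarith)]; linarith
      · rw [min_eq_right h3, max_eq_right (by norm_num)]; linarith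
    have h2 : d ≤ u := by
      simp only [hd]
      rcases le_total (u+v) 1 with h3 | h3
      · rw [min_eq_left h3, max_eq_right (by linarith)]; linarith
      · rw [min_eq_right h3, max_eq_right (by norm_num)]; linarith
    refine ⟨d / u, by positivity, by rw [div_le_one h]; exact h2, ?_⟩
    rw [div_mul_cancel₀ _ (ne_of_gt h)]


lemma psd_symm {n : ℕ} {P : Matrix (Fin n) (Fin n) ℝ} (hP : P.PosSemidef)
    (a b : Fin n → ℝ) : b ⬝ᵥ P.mulVec a = a ⬝ᵥ P.mulVec b := by
  have hPt : Pᵀ = P := hP.isHermitian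
  rw [dotProduct_mulVec, ← mulVec_transpose, hPt, dotProduct_comm]

lemma quad_cvx {n : ℕ} {P : Matrix (Fin n) (Fin n) ℝ} (hP : P.PosSemidef)
    (a b : Fin n → ℝ) (θ : ℝ) (h0 : 0 ≤ θ) (h1 : θ ≤ 1) :
    (θ • a + (1 - θ) • b) ⬝ᵥ P.mulVec (θ • a + (1 - θ) • b) ≤
      max (a ⬝ᵥ P.mulVec a) (b ⬝ᵥ P.mulVec b) := by
  have hab := psd_symm hP a b
  have hpsd : 0 ≤ (a - b) ⬝ᵥ P.mulVec (a - b) := by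
    have := hP.dotProduct_mulVec_nonneg (a - b); simpa using this
  have expand : (a - b) ⬝ᵥ P.mulVec (a - b) =
      a ⬝ᵥ P.mulVec a - 2 * (a ⬝ᵥ P.mulVec b) + b ⬝ᵥ P.mulVec b := by
    simp [sub_eq_add_neg, mulVec_add, mulVec_neg, dotProduct_add, add_dotProduct,
      neg_dotProduct, dotProduct_neg, hab]; ring
  have expand2 : (θ • a + (1 - θ) • b) ⬝ᵥ P.mulVec (θ • a + (1 - θ) • b) =
      θ^2 * (a ⬝ᵥ P.mulVec a) + 2*θ*(1-θ) * (a ⬝ᵥ P.mulVec b) + (1-θ)^2 * (b ⬝ᵥ P.mulVec b) := by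
    simp [mulVec_add, mulVec_smul, dotProduct_add, add_dotProduct, dotProduct_smul,
      smul_dotProduct, smul_eq_mul, hab]; ring
  rcases le_total (a ⬝ᵥ P.mulVec a) (b ⬝ᵥ P.mulVec b) with h | h
  · rw [max_eq_right h]; nlinarith [mul_nonneg (mul_nonneg h0 (by linarith : (0:ℝ) ≤ 1-θ)) hpsd]
  · rw [max_eq_left h]; nlinarith [mul_nonneg (mul_nonneg h0 (by linarith : (0:ℝ) ≤ 1-θ)) hpsd]
lemma key {n : ℕ} {ι : Type} [DecidableEq ι] {P : Matrix (Fin n) (Fin n) ℝ}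
    (hP : P.PosSemidef) (w : ι → Fin n → ℝ) (θ : ι → ℝ)
    (h0 : ∀ j, 0 ≤ θ j) (h1 : ∀ j, θ j ≤ 1) (s : Finset ι) :
    ∀ x : Fin n → ℝ,
    (x + ∑ j ∈ s, θ j • w j) ⬝ᵥ P.mulVec (x + ∑ j ∈ s, θ j • w j) ≤
      s.powerset.sup' ⟨∅, Finset.empty_mem_powerset s⟩
        (fun J => (x + ∑ j ∈ J, w j) ⬝ᵥ P.mulVec (x + ∑ j ∈ J, w j)) := by
  induction s using Finset.induction_on with
  | empty =>
    intro x
    apply Finset.le_sup' (b := (∅ : Finset ι)) _ (Finset.empty_mem_powerset ∅) |>.trans_eq' ?_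
    simp
  | insert a s ha ih =>
    intro x
    set y := x + ∑ j ∈ s, θ j • w j with hy
    have hsum : x + ∑ j ∈ insert a s, θ j • w j
        = θ a • (y + w a) + (1 - θ a) • y := by
      rw [Finset.sum_insert ha]
      simp only [hy, smul_add, sub_smul, one_smul]
      abel
    rw [hsum]
    refine (quad_cvx hP _ _ _ (h0 a) (h1 a)).trans (max_le ?_ ?_)
    · have := ih (x + w a)
      have heq : x + w a + ∑ j ∈ s, θ j • w j = y + w a := by rw [hy]; abel
      rw [heq] at this
      refine this.trans (Finset.sup'_le _ _ fun J hJ => ?_)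
      have hJs := Finset.mem_powerset.mp hJ
      have haJ : a ∉ J := fun h => ha (hJs h)
      have : x + w a + ∑ j ∈ J, w j = x + ∑ j ∈ insert a J, w j := by
        rw [Finset.sum_insert haJ]; abel
      rw [this]
      exact Finset.le_sup' (fun J => (x + ∑ j ∈ J, w j) ⬝ᵥ P.mulVec (x + ∑ j ∈ J, w j))
        (Finset.mem_powerset.mpr (Finset.insert_subset_insert a hJs))
    · refine (ih x).trans (Finset.sup'_le _ _ fun J hJ => ?_)
      exact Finset.le_sup' (fun J => (x + ∑ j ∈ J, w j) ⬝ᵥ P.mulVec (x + ∑ j ∈ J, w j))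
        (Finset.mem_powerset.mpr ((Finset.mem_powerset.mp hJ).trans (Finset.subset_insert a s)))

/-- For `P ⪰ 0` symmetric, every `e` and every `v` with `‖v‖_∞ ≤ 1`,
`f(e,v)ᵀ P f(e,v) ≤ max_{𝒥 ⊆ {1,…,m}} eᵀ A_K(𝒥)ᵀ P A_K(𝒥) e`. -/
theorem stmt2 {n m : ℕ} (A : Matrix (Fin n) (Fin n) ℝ) (B : Matrix (Fin n) (Fin m) ℝ)
    (K : Matrix (Fin m) (Fin n) ℝ) (P : Matrix (Fin n) (Fin n) ℝ) (hP : P.PosSemidef)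
    (e : Fin n → ℝ) (v : Fin m → ℝ) (hv : ∀ j, |v j| ≤ 1) :
    errDyn A B K e v ⬝ᵥ P.mulVec (errDyn A B K e v) ≤
      Finset.univ.sup' Finset.univ_nonempty
        (fun J : Finset (Fin m) => e ⬝ᵥ ((AK A B K J)ᵀ * P * AK A B K J).mulVec e) := by
  set u : Fin m → ℝ := K.mulVec e with hu
  choose θ h0 h1 hθ using fun j => sat_theta (u j) (v j) (hv j)
  set w : Fin m → Fin n → ℝ := fun j i => B i j * u j with hw
  -- rewrite errDyn
  have hsat : ∀ j, (satVec (K.mulVec e + v) - v) j = θ j * u j := by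
    intro j
    have : satVec (K.mulVec e + v) j = max (-1) (min (u j + v j) 1) := by
      rw [satVec, sat, sat_eq]; rfl
    simp [Pi.sub_apply, this, hθ j]
  have herr : errDyn A B K e v = A.mulVec e + ∑ j, θ j • w j := by
    funext i
    simp only [errDyn, Pi.add_apply, mulVec, dotProduct, Finset.sum_apply, Pi.smul_apply,
      smul_eq_mul, hw]
    congr 1
    refine Finset.sum_congr rfl fun j _ => ?_
    rw [hsat j]; ring
  have hAK : ∀ J : Finset (Fin m), (AK A B K J).mulVec e = A.mulVec e + ∑ j ∈ J, w j := by
    intro J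
    funext i
    have hL : (AK A B K J *ᵥ e) i = ∑ k, (A i k + ∑ j ∈ J, B i j * K j k) * e k := by
      simp [AK, mulVec, dotProduct, Finset.sum_apply, Matrix.sum_apply, vecMulVec_apply]
    rw [hL]
    simp only [add_mul, Finset.sum_add_distrib, Finset.sum_mul, Pi.add_apply,
      Finset.sum_apply, mulVec, dotProduct, hw, hu, Finset.mul_sum]
    congr 1
    rw [Finset.sum_comm]
    exact Finset.sum_congr rfl fun j _ => Finset.sum_congr rfl fun k _ => by ring
  have hquad : ∀ J : Finset (Fin m),
      e ⬝ᵥ ((AK A B K J)ᵀ * P * AK A B K J).mulVec e =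
        ((AK A B K J).mulVec e) ⬝ᵥ P.mulVec ((AK A B K J).mulVec e) := by
    intro J
    rw [← mulVec_mulVec, ← mulVec_mulVec, dotProduct_mulVec, vecMul_transpose]
  rw [herr]
  refine (key hP w θ h0 h1 Finset.univ (A.mulVec e)).trans (Finset.sup'_le _ _ fun J hJ => ?_)
  have := Finset.le_sup' (s := (Finset.univ : Finset (Finset (Fin m))))
    (fun J : Finset (Fin m) => e ⬝ᵥ ((AK A B K J)ᵀ * P * AK A B K J).mulVec e)
    (Finset.mem_univ J)
  rw [hquad J, hAK J] at this
  exact this.trans_eq (by congr 1)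
end

section
/- Let P ∈ ℝ^{n×n} be symmetric positive definite and λ ∈ [0, 1) be such that A_K(𝒥)^⊤ P A_K(𝒥) ⪯ λ P for every subset 𝒥 ⊆ {1, …, m}. Let (e_i)_{i≥0} be a sequence of square-integrable random vectors in ℝ^n satisfying e_{i+1} = f(e_i, v_i) + w_i, where each v_i is a (possibly random) vector with ‖v_i‖_∞ ≤ 1 almost surely, and each w_i is a square-integrable random vector that is independent of e_i (and of v_i), with E[w_i] = 0 and E[w_i w_i^⊤] = W. Then for all i: E[e_{i+1}^⊤ P e_{i+1}] ≤ λ · E[e_i^⊤ P e_i] + Tr(PW). Moreover, if e_0 = 0 almost surely, then E[e_i^⊤ P e_i] ≤ ((1 − λ^i)/(1 − λ)) · Tr(PW) for all i ≥ 0. -/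
open Matrix MeasureTheory ProbabilityTheory
open scoped ENNReal

lemma sat_eq_clamp (x : ℝ) : sat x = max (-1) (min x 1) := by
  unfold sat
  rcases lt_trichotomy x 0 with h | h | h
  · rw [Real.sign_of_neg h, abs_of_neg h]
    rcases le_or_gt (-1) x with h1 | h1
    · rw [min_eq_left (by linarith), min_eq_left (by linarith), max_eq_right h1]; ring
    · rw [min_eq_right (by linarith), min_eq_left (by linarith), max_eq_left (by linarith)]; ring
  · simp [h]
  · rw [Real.sign_of_pos h, abs_of_pos h, one_mul, max_eq_right (le_min (by linarith) (by norm_num))]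

lemma sat_abs_le (x : ℝ) : |sat x| ≤ 1 := by
  rw [sat_eq_clamp, abs_le]
  exact ⟨le_max_left _ _, max_le (by norm_num) (min_le_right _ _)⟩

lemma sat_continuous : Continuous sat := by
  have : sat = fun x => max (-1) (min x 1) := funext sat_eq_clamp
  rw [this]; fun_prop

lemma sat_shift {z v : ℝ} (hv : |v| ≤ 1) : ∃ θ ∈ Set.Icc (0:ℝ) 1, sat (z + v) - v = θ * z := by
  rw [abs_le] at hv
  rcases lt_trichotomy z 0 with hz | hz | hz
  · refine ⟨(sat (z + v) - v) / z, ⟨?_, ?_⟩, (div_mul_cancel₀ _ hz.ne).symm⟩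
    · apply div_nonneg_of_nonpos _ hz.le
      rw [sat_eq_clamp]
      have h2 : min (z + v) 1 ≤ v := le_trans (min_le_left _ _) (by linarith)
      simp only [sub_nonpos, max_le_iff]
      exact ⟨by linarith, h2⟩
    · rw [div_le_one_iff]
      refine Or.inr (Or.inr ⟨hz, ?_⟩)
      rw [sat_eq_clamp]
      have h3 : min (z + v) 1 = z + v := min_eq_left (by linarith)
      rw [h3]
      have := le_max_right (-1 : ℝ) (z + v)
      linarith
  · exact ⟨0, ⟨le_refl _, zero_le_one⟩, by
      simp [hz, sat_eq_clamp, min_eq_left hv.2, max_eq_right hv.1]⟩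
  · refine ⟨(sat (z + v) - v) / z, ⟨?_, ?_⟩, (div_mul_cancel₀ _ hz.ne').symm⟩
    · apply div_nonneg _ hz.le
      rw [sat_eq_clamp, sub_nonneg]
      exact le_max_of_le_right (le_min (by linarith) hv.2)
    · rw [div_le_one hz, sat_eq_clamp]
      have h1 : min (z + v) 1 ≤ z + v := min_le_left _ _
      exact sub_le_iff_le_add.mpr (max_le (by linarith) (by linarith))

lemma quad_convex {n : ℕ} {P : Matrix (Fin n) (Fin n) ℝ} (hP : P.PosSemidef)
    (a b : Fin n → ℝ) {θ : ℝ} (h0 : 0 ≤ θ) (h1 : θ ≤ 1) :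
    (θ • a + (1 - θ) • b) ⬝ᵥ P.mulVec (θ • a + (1 - θ) • b) ≤
      θ * (a ⬝ᵥ P.mulVec a) + (1 - θ) * (b ⬝ᵥ P.mulVec b) := by
  have hd : 0 ≤ (a - b) ⬝ᵥ P.mulVec (a - b) := hP.dotProduct_mulVec_nonneg _
  have hexp : (a - b) ⬝ᵥ P.mulVec (a - b) =
      a ⬝ᵥ P.mulVec a - a ⬝ᵥ P.mulVec b - b ⬝ᵥ P.mulVec a + b ⬝ᵥ P.mulVec b := by
    simp [Matrix.mulVec_sub, dotProduct_sub, sub_dotProduct]; ring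
  have hexp2 : (θ • a + (1 - θ) • b) ⬝ᵥ P.mulVec (θ • a + (1 - θ) • b) =
      θ * θ * (a ⬝ᵥ P.mulVec a) + θ * (1 - θ) * (a ⬝ᵥ P.mulVec b) +
      (1 - θ) * θ * (b ⬝ᵥ P.mulVec a) + (1 - θ) * (1 - θ) * (b ⬝ᵥ P.mulVec b) := by
    simp [Matrix.mulVec_add, Matrix.mulVec_smul, dotProduct_add, add_dotProduct,
      dotProduct_smul, smul_dotProduct, smul_eq_mul]
    ring
  nlinarith [mul_nonneg (mul_nonneg h0 (by linarith : (0:ℝ) ≤ 1 - θ)) hd]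

lemma quad_AK {n m : ℕ} {A : Matrix (Fin n) (Fin n) ℝ} {B : Matrix (Fin n) (Fin m) ℝ}
    {K : Matrix (Fin m) (Fin n) ℝ} {P : Matrix (Fin n) (Fin n) ℝ} {lam : ℝ}
    (hcontr : ∀ J : Finset (Fin m),
      (lam • P - (AK A B K J)ᵀ * P * AK A B K J).PosSemidef)
    (J : Finset (Fin m)) (x : Fin n → ℝ) :
    (AK A B K J).mulVec x ⬝ᵥ P.mulVec ((AK A B K J).mulVec x) ≤ lam * (x ⬝ᵥ P.mulVec x) := by
  have h := (hcontr J).dotProduct_mulVec_nonneg x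
  simp only [star_trivial] at h
  set C := AK A B K J
  have h1 : (Cᵀ * P * C).mulVec x = Cᵀ.mulVec (P.mulVec (C.mulVec x)) := by
    rw [Matrix.mulVec_mulVec, Matrix.mulVec_mulVec, Matrix.mul_assoc]
  have h2 : x ⬝ᵥ Cᵀ.mulVec (P.mulVec (C.mulVec x)) = C.mulVec x ⬝ᵥ P.mulVec (C.mulVec x) := by
    rw [Matrix.dotProduct_mulVec, Matrix.vecMul_transpose]
  rw [Matrix.sub_mulVec, dotProduct_sub, h1, h2, Matrix.smul_mulVec,
    dotProduct_smul, smul_eq_mul] at h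
  linarith

lemma quad_hull {n m : ℕ} {A : Matrix (Fin n) (Fin n) ℝ} {B : Matrix (Fin n) (Fin m) ℝ}
    {K : Matrix (Fin m) (Fin n) ℝ} {P : Matrix (Fin n) (Fin n) ℝ} {lam : ℝ}
    (hP : P.PosSemidef)
    (hcontr : ∀ J : Finset (Fin m),
      (lam • P - (AK A B K J)ᵀ * P * AK A B K J).PosSemidef)
    (s : Finset (Fin m)) :
    ∀ θ : Fin m → ℝ, (∀ j, θ j ∈ Set.Icc (0:ℝ) 1) → (∀ j ∉ s, θ j = 0 ∨ θ j = 1) →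
    ∀ x : Fin n → ℝ,
      (A + ∑ j, θ j • Matrix.vecMulVec (fun i => B i j) (K j)).mulVec x ⬝ᵥ
        P.mulVec ((A + ∑ j, θ j • Matrix.vecMulVec (fun i => B i j) (K j)).mulVec x)
        ≤ lam * (x ⬝ᵥ P.mulVec x) := by
  induction s using Finset.induction_on with
  | empty =>
    intro θ hθ hout x
    have hM : (A + ∑ j, θ j • Matrix.vecMulVec (fun i => B i j) (K j)) =
        AK A B K (Finset.univ.filter (fun j => θ j = 1)) := by
      unfold AK
      congr 1
      rw [Finset.sum_filter]
      refine Finset.sum_congr rfl fun j _ => ?_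
      rcases hout j (Finset.notMem_empty j) with h | h
      · simp [h]
      · simp [h]
    rw [hM]
    exact quad_AK hcontr _ x
  | @insert j s' hj ih =>
    intro θ hθ hout x
    set M : Fin m → Matrix (Fin n) (Fin n) ℝ := fun k => Matrix.vecMulVec (fun i => B i k) (K k)
      with hMdef
    set S : Matrix (Fin n) (Fin n) ℝ := ∑ k ∈ Finset.univ \ {j}, θ k • M k with hS
    have hsum : ∀ c : ℝ, (∑ k, Function.update θ j c k • M k) = c • M j + S := by
      intro c
      rw [hS]
      rw [show (∑ k, Function.update θ j c k • M k) =
          ∑ k, Function.update (fun k => θ k • M k) j (c • M j) k from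
        Finset.sum_congr rfl fun k _ => by
          rcases eq_or_ne k j with rfl | hk
          · simp
          · simp [Function.update_of_ne hk]]
      rw [Finset.sum_update_of_mem (Finset.mem_univ j)]
    have hsplit : (∑ k, θ k • M k) = θ j • M j + S := by
      rw [hS, Finset.sum_eq_sum_sdiff_singleton_add (Finset.mem_univ j), add_comm]
    have hkey : (A + ∑ k, θ k • M k).mulVec x =
        θ j • ((A + ∑ k, Function.update θ j 1 k • M k).mulVec x) +
        (1 - θ j) • ((A + ∑ k, Function.update θ j 0 k • M k).mulVec x) := by
      have h : (A + ∑ k, θ k • M k) =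
          θ j • (A + ∑ k, Function.update θ j 1 k • M k) +
          (1 - θ j) • (A + ∑ k, Function.update θ j 0 k • M k) := by
        rw [hsum, hsum, hsplit]
        module
      rw [h, Matrix.add_mulVec, Matrix.smul_mulVec, Matrix.smul_mulVec]
    rw [hkey]
    have h0 := (hθ j).1
    have h1 := (hθ j).2
    calc _ ≤ θ j * ((A + ∑ k, Function.update θ j 1 k • M k).mulVec x ⬝ᵥ
              P.mulVec ((A + ∑ k, Function.update θ j 1 k • M k).mulVec x)) +
            (1 - θ j) * ((A + ∑ k, Function.update θ j 0 k • M k).mulVec x ⬝ᵥ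
              P.mulVec ((A + ∑ k, Function.update θ j 0 k • M k).mulVec x)) :=
          quad_convex hP _ _ h0 h1
    _ ≤ θ j * (lam * (x ⬝ᵥ P.mulVec x)) + (1 - θ j) * (lam * (x ⬝ᵥ P.mulVec x)) := by
        have ha := ih (Function.update θ j 1)
          (fun k => by
            rcases eq_or_ne k j with rfl | hk
            · simp
            · simp only [Function.update_of_ne hk]; exact hθ k)
          (fun k hk => by
            rcases eq_or_ne k j with rfl | hk2
            · simp
            · simp only [Function.update_of_ne hk2]
              exact hout k (by simp [hk2, hk])) x
        have hb := ih (Function.update θ j 0)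
          (fun k => by
            rcases eq_or_ne k j with rfl | hk
            · simp
            · simp only [Function.update_of_ne hk]; exact hθ k)
          (fun k hk => by
            rcases eq_or_ne k j with rfl | hk2
            · simp
            · simp only [Function.update_of_ne hk2]
              exact hout k (by simp [hk2, hk])) x
        have h2 := mul_le_mul_of_nonneg_left ha h0
        have h3 := mul_le_mul_of_nonneg_left hb (by linarith : (0:ℝ) ≤ 1 - θ j)
        linarith
    _ = lam * (x ⬝ᵥ P.mulVec x) := by ring

lemma errDyn_quad_le {n m : ℕ} {A : Matrix (Fin n) (Fin n) ℝ} {B : Matrix (Fin n) (Fin m) ℝ}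
    {K : Matrix (Fin m) (Fin n) ℝ} {P : Matrix (Fin n) (Fin n) ℝ} {lam : ℝ}
    (hP : P.PosSemidef)
    (hcontr : ∀ J : Finset (Fin m),
      (lam • P - (AK A B K J)ᵀ * P * AK A B K J).PosSemidef)
    (x : Fin n → ℝ) (vv : Fin m → ℝ) (hvv : ∀ j, |vv j| ≤ 1) :
    errDyn A B K x vv ⬝ᵥ P.mulVec (errDyn A B K x vv) ≤ lam * (x ⬝ᵥ P.mulVec x) := by
  choose θ hθI hθE using fun j => sat_shift (z := (K.mulVec x) j) (hvv j)
  have heq : errDyn A B K x vv =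
      (A + ∑ j, θ j • Matrix.vecMulVec (fun i => B i j) (K j)).mulVec x := by
    unfold errDyn
    rw [Matrix.add_mulVec]
    congr 1
    funext i
    have hu : ∀ j, (satVec (K.mulVec x + vv) - vv) j = θ j * (K.mulVec x) j := by
      intro j
      simp only [Pi.sub_apply, satVec, Pi.add_apply]
      exact hθE j
    show ∑ j, B i j * ((satVec (K.mulVec x + vv) - vv) j) = _
    simp only [hu]
    have hR : ((∑ j, θ j • Matrix.vecMulVec (fun i => B i j) (K j)).mulVec x) i =
        ∑ l, (∑ j, θ j * (B i j * K j l)) * x l := by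
      simp [Matrix.mulVec, dotProduct, Matrix.sum_apply, Matrix.smul_apply,
        Matrix.vecMulVec_apply, smul_eq_mul]
    rw [hR]
    calc ∑ j, B i j * (θ j * (K.mulVec x) j)
        = ∑ j, ∑ l, θ j * (B i j * K j l) * x l := by
          refine Finset.sum_congr rfl fun j _ => ?_
          show B i j * (θ j * ∑ l, K j l * x l) = _
          rw [Finset.mul_sum, Finset.mul_sum]
          exact Finset.sum_congr rfl fun l _ => by ring
      _ = ∑ l, ∑ j, θ j * (B i j * K j l) * x l := Finset.sum_comm
      _ = ∑ l, (∑ j, θ j * (B i j * K j l)) * x l := by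
          exact Finset.sum_congr rfl fun l _ => (Finset.sum_mul _ _ _).symm
  rw [heq]
  exact quad_hull hP hcontr Finset.univ θ hθI (fun j hj => absurd (Finset.mem_univ j) hj) x

lemma quad_integral {n : ℕ} {Ω : Type*} [MeasurableSpace Ω] (μ : Measure Ω)
    [IsProbabilityMeasure μ] (P : Matrix (Fin n) (Fin n) ℝ) {X Y : Ω → Fin n → ℝ}
    (hX : ∀ j, MemLp (fun ω => X ω j) 2 μ) (hY : ∀ j, MemLp (fun ω => Y ω j) 2 μ) :
    Integrable (fun ω => X ω ⬝ᵥ P.mulVec (Y ω)) μ ∧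
    ∫ ω, X ω ⬝ᵥ P.mulVec (Y ω) ∂μ = ∑ j, ∑ l, P j l * ∫ ω, X ω j * Y ω l ∂μ := by
  have hpqr : (1 : ℝ≥0∞) / 1 = 1 / 2 + 1 / 2 := by
    rw [ENNReal.div_add_div_same, one_div_one, one_add_one_eq_two,
      ENNReal.div_self two_ne_zero ENNReal.ofNat_ne_top]
  have hmul : ∀ j l, Integrable (fun ω => X ω j * Y ω l) μ := by
    intro j l
    have h := ((hY l).smul (hX j) : MemLp ((fun ω => X ω j) • (fun ω => Y ω l)) 1 μ)
    rw [memLp_one_iff_integrable] at h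
    exact h
  have hfun : (fun ω => X ω ⬝ᵥ P.mulVec (Y ω)) =
      fun ω => ∑ j, ∑ l, P j l * (X ω j * Y ω l) := by
    funext ω
    simp only [Matrix.mulVec, dotProduct]
    rw [Finset.sum_congr rfl (fun j (_ : j ∈ Finset.univ) => Finset.mul_sum Finset.univ _ (X ω j))]
    exact Finset.sum_congr rfl fun j _ => Finset.sum_congr rfl fun l _ => by ring
  constructor
  · rw [hfun]
    exact integrable_finset_sum _ fun j _ =>
      integrable_finset_sum _ fun l _ => (hmul j l).const_mul _
  · rw [hfun, integral_finset_sum _ (f := fun j ω => ∑ l, P j l * (X ω j * Y ω l)) (fun j _ =>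
      integrable_finset_sum _ fun l _ => (hmul j l).const_mul _)]
    refine Finset.sum_congr rfl fun j _ => ?_
    rw [integral_finset_sum _ (f := fun l ω => P j l * (X ω j * Y ω l)) fun l _ => (hmul j l).const_mul _]
    exact Finset.sum_congr rfl fun l _ => integral_const_mul _ _

/-- Under the contraction LMIs `A_K(𝒥)ᵀ P A_K(𝒥) ⪯ λ P` (for all `𝒥`), the error
process `e_{i+1} = f(e_i, v_i) + w_i` driven by i.i.d.-type noise `w_i` (zero mean,
covariance `W`, independent of `(e_i, v_i)`), with `‖v_i‖_∞ ≤ 1` a.s., satisfies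
`E[e_{i+1}ᵀ P e_{i+1}] ≤ λ E[e_iᵀ P e_i] + Tr(PW)`; and if `e_0 = 0` a.s., then
`E[e_iᵀ P e_i] ≤ ((1 − λ^i)/(1 − λ)) Tr(PW)` for all `i`. -/
theorem stmt4 {n m : ℕ} {Ω : Type*} [MeasurableSpace Ω] (μ : Measure Ω)
    [IsProbabilityMeasure μ]
    (A : Matrix (Fin n) (Fin n) ℝ) (B : Matrix (Fin n) (Fin m) ℝ)
    (K : Matrix (Fin m) (Fin n) ℝ) (P W : Matrix (Fin n) (Fin n) ℝ)
    (hP : P.PosDef) (lam : ℝ) (hlam : lam ∈ Set.Ico (0 : ℝ) 1)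
    (hcontr : ∀ J : Finset (Fin m),
      (lam • P - (AK A B K J)ᵀ * P * AK A B K J).PosSemidef)
    (e w : ℕ → Ω → Fin n → ℝ) (v : ℕ → Ω → Fin m → ℝ)
    (heMeas : ∀ i, Measurable (e i)) (hvMeas : ∀ i, Measurable (v i))
    (hwMeas : ∀ i, Measurable (w i))
    (heL2 : ∀ i, MemLp (e i) 2 μ) (hwL2 : ∀ i, MemLp (w i) 2 μ)
    (hrec : ∀ i ω, e (i + 1) ω = errDyn A B K (e i ω) (v i ω) + w i ω)
    (hv : ∀ i, ∀ᵐ ω ∂μ, ∀ j, |v i ω j| ≤ 1)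
    (hindep : ∀ i, IndepFun (w i) (fun ω => (e i ω, v i ω)) μ)
    (hmean : ∀ i j, ∫ ω, w i ω j ∂μ = 0)
    (hcov : ∀ i j l, ∫ ω, w i ω j * w i ω l ∂μ = W j l) :
    (∀ i, ∫ ω, e (i + 1) ω ⬝ᵥ P.mulVec (e (i + 1) ω) ∂μ ≤
        lam * ∫ ω, e i ω ⬝ᵥ P.mulVec (e i ω) ∂μ + (P * W).trace) ∧
    ((∀ᵐ ω ∂μ, e 0 ω = 0) →
      ∀ i, ∫ ω, e i ω ⬝ᵥ P.mulVec (e i ω) ∂μ ≤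
        (1 - lam ^ i) / (1 - lam) * (P * W).trace) := by
  obtain ⟨hlam0, hlam1⟩ := hlam
  -- coordinates of e and w are in L²
  have Ecoord : ∀ i j, MemLp (fun ω => e i ω j) 2 μ := fun i j =>
    (heL2 i).of_le ((measurable_pi_apply j).comp (heMeas i)).aestronglyMeasurable
      (Filter.Eventually.of_forall fun ω => norm_le_pi_norm (e i ω) j)
  have Wcoord : ∀ i j, MemLp (fun ω => w i ω j) 2 μ := fun i j =>
    (hwL2 i).of_le ((measurable_pi_apply j).comp (hwMeas i)).aestronglyMeasurable
      (Filter.Eventually.of_forall fun ω => norm_le_pi_norm (w i ω) j)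
  -- measurability of the dynamics map
  have hD : Measurable (fun p : (Fin n → ℝ) × (Fin m → ℝ) => errDyn A B K p.1 p.2) := by
    have hsatv : Continuous (fun u : Fin m → ℝ => satVec u) :=
      continuous_pi fun j => sat_continuous.comp (continuous_apply j)
    have : Continuous (fun p : (Fin n → ℝ) × (Fin m → ℝ) => errDyn A B K p.1 p.2) := by
      unfold errDyn
      exact ((continuous_const.matrix_mulVec continuous_fst).add
        (continuous_const.matrix_mulVec
          ((hsatv.comp ((continuous_const.matrix_mulVec continuous_fst).add
            continuous_snd)).sub continuous_snd)))
    exact this.measurable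
  set F : ℕ → Ω → Fin n → ℝ := fun i ω => errDyn A B K (e i ω) (v i ω) with hF
  have hFmeas : ∀ i, Measurable (F i) := fun i => hD.comp ((heMeas i).prodMk (hvMeas i))
  -- coordinates of F are in L²
  have Fcoord : ∀ i j, MemLp (fun ω => F i ω j) 2 μ := by
    intro i j
    have h1 : MemLp (fun ω => (A.mulVec (e i ω)) j) 2 μ := by
      have heq : (fun ω => (A.mulVec (e i ω)) j) = fun ω => ∑ l, A j l * e i ω l := rfl
      rw [heq]
      exact memLp_finset_sum _ fun l _ => (Ecoord i l).const_mul (A j l)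
    have hAm : Measurable (fun ω => (A.mulVec (e i ω)) j) := by
      have heq : (fun ω => (A.mulVec (e i ω)) j) = fun ω => ∑ l, A j l * e i ω l := rfl
      rw [heq]
      exact Finset.measurable_sum _ fun l _ =>
        ((measurable_pi_apply l).comp (heMeas i)).const_mul (A j l)
    have h2 : MemLp (fun ω => (B.mulVec (satVec (K.mulVec (e i ω) + v i ω) - v i ω)) j) 2 μ := by
      refine MemLp.mono_exponent (q := ⊤) ?_ le_top
      refine memLp_top_of_bound ?_ (∑ k, |B j k| * 2) ?_
      · have heq : (fun ω => (B.mulVec (satVec (K.mulVec (e i ω) + v i ω) - v i ω)) j) =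
            fun ω => F i ω j - (A.mulVec (e i ω)) j := by
          funext ω
          simp [hF, errDyn]
        rw [heq]
        exact (((measurable_pi_apply j).comp (hFmeas i)).sub hAm).aestronglyMeasurable
      · filter_upwards [hv i] with ω hω
        have heq : (B.mulVec (satVec (K.mulVec (e i ω) + v i ω) - v i ω)) j =
            ∑ k, B j k * ((satVec (K.mulVec (e i ω) + v i ω) - v i ω) k) := rfl
        rw [Real.norm_eq_abs, heq]
        refine (Finset.abs_sum_le_sum_abs _ _).trans (Finset.sum_le_sum fun k _ => ?_)
        rw [abs_mul]
        refine mul_le_mul_of_nonneg_left ?_ (abs_nonneg _)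
        have h3 : |(satVec (K.mulVec (e i ω) + v i ω) - v i ω) k| ≤
            |sat ((K.mulVec (e i ω) + v i ω) k)| + |v i ω k| := by
          simp only [Pi.sub_apply, satVec]
          exact abs_sub _ _
        calc |(satVec (K.mulVec (e i ω) + v i ω) - v i ω) k|
            ≤ |sat ((K.mulVec (e i ω) + v i ω) k)| + |v i ω k| := h3
          _ ≤ 1 + 1 := add_le_add (sat_abs_le _) (hω k)
          _ = 2 := by norm_num
    have heq : (fun ω => F i ω j) =
        (fun ω => (A.mulVec (e i ω)) j) + (fun ω => (B.mulVec (satVec (K.mulVec (e i ω) + v i ω) - v i ω)) j) := by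
      funext ω
      simp [hF, errDyn]
    rw [heq]
    exact h1.add h2
  -- cross terms vanish
  have hcross : ∀ i j l, ∫ ω, F i ω j * w i ω l ∂μ = 0 := by
    intro i j l
    have hind : IndepFun (fun ω => F i ω j) (fun ω => w i ω l) μ :=
      (((hindep i).comp (measurable_pi_apply l)
        ((measurable_pi_apply j).comp hD)).symm :)
    have hint1 : Integrable (fun ω => F i ω j) μ := (Fcoord i j).integrable one_le_two
    have hint2 : Integrable (fun ω => w i ω l) μ := (Wcoord i l).integrable one_le_two
    have := hind.integral_mul_eq_mul_integral hint1.1 hint2.1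
    calc ∫ ω, F i ω j * w i ω l ∂μ
        = (∫ ω, F i ω j ∂μ) * ∫ ω, w i ω l ∂μ := this
      _ = 0 := by rw [hmean i l, mul_zero]
  have hcross2 : ∀ i j l, ∫ ω, w i ω j * F i ω l ∂μ = 0 := by
    intro i j l
    rw [show (fun ω => w i ω j * F i ω l) = fun ω => F i ω l * w i ω j from
      funext fun ω => mul_comm _ _]
    exact hcross i l j
  -- W is symmetric
  have hWsymm : ∀ j l, W j l = W l j := by
    intro j l
    rw [← hcov 0 j l, ← hcov 0 l j]
    exact integral_congr_ae (Filter.Eventually.of_forall fun ω => mul_comm _ _)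
  have htr : (P * W).trace = ∑ j, ∑ l, P j l * W j l := by
    rw [Matrix.trace]
    refine Finset.sum_congr rfl fun j _ => ?_
    rw [Matrix.diag_apply, Matrix.mul_apply]
    exact Finset.sum_congr rfl fun l _ => by rw [hWsymm j l]
  -- the one-step inequality
  have hstep : ∀ i, ∫ ω, e (i + 1) ω ⬝ᵥ P.mulVec (e (i + 1) ω) ∂μ ≤
      lam * ∫ ω, e i ω ⬝ᵥ P.mulVec (e i ω) ∂μ + (P * W).trace := by
    intro i
    have hmul2 : ∀ {X Y : Ω → ℝ}, MemLp X 2 μ → MemLp Y 2 μ →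
        Integrable (fun ω => X ω * Y ω) μ := by
      intro X Y hX hY
      have hpqr : (1 : ℝ≥0∞) / 1 = 1 / 2 + 1 / 2 := by
        rw [ENNReal.div_add_div_same, one_div_one, one_add_one_eq_two,
          ENNReal.div_self two_ne_zero ENNReal.ofNat_ne_top]
      have h := (hY.smul hX : MemLp (X • Y) 1 μ)
      rw [memLp_one_iff_integrable] at h
      exact h
    have hco : ∀ j l, ∫ ω, e (i + 1) ω j * e (i + 1) ω l ∂μ =
        ∫ ω, F i ω j * F i ω l ∂μ + W j l := by
      intro j l
      have h1 : (fun ω => e (i + 1) ω j * e (i + 1) ω l) =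
          fun ω => F i ω j * F i ω l + (F i ω j * w i ω l +
            (w i ω j * F i ω l + w i ω j * w i ω l)) := by
        funext ω
        rw [hrec i ω]
        simp only [Pi.add_apply, hF]
        ring
      rw [h1]
      have i1 : Integrable (fun ω => F i ω j * F i ω l) μ := hmul2 (Fcoord i j) (Fcoord i l)
      have i2 : Integrable (fun ω => F i ω j * w i ω l) μ := hmul2 (Fcoord i j) (Wcoord i l)
      have i3 : Integrable (fun ω => w i ω j * F i ω l) μ := hmul2 (Wcoord i j) (Fcoord i l)
      have i4 : Integrable (fun ω => w i ω j * w i ω l) μ := hmul2 (Wcoord i j) (Wcoord i l)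
      have i34 : Integrable (fun ω => w i ω j * F i ω l + w i ω j * w i ω l) μ := i3.add i4
      have i234 : Integrable
          (fun ω => F i ω j * w i ω l + (w i ω j * F i ω l + w i ω j * w i ω l)) μ := i2.add i34
      rw [integral_add i1 i234, integral_add i2 i34,
        integral_add i3 i4, hcross i j l, hcross2 i j l, hcov i j l]
      ring
    have hexp := (quad_integral μ P (Ecoord (i + 1)) (Ecoord (i + 1))).2
    have hQF := quad_integral μ P (Fcoord i) (Fcoord i)
    have hmain : ∫ ω, e (i + 1) ω ⬝ᵥ P.mulVec (e (i + 1) ω) ∂μ =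
        (∫ ω, F i ω ⬝ᵥ P.mulVec (F i ω) ∂μ) + (P * W).trace := by
      rw [hexp, hQF.2, htr, ← Finset.sum_add_distrib]
      refine Finset.sum_congr rfl fun j _ => ?_
      rw [← Finset.sum_add_distrib]
      refine Finset.sum_congr rfl fun l _ => ?_
      rw [hco j l]
      ring
    rw [hmain]
    have hbound : ∫ ω, F i ω ⬝ᵥ P.mulVec (F i ω) ∂μ ≤
        lam * ∫ ω, e i ω ⬝ᵥ P.mulVec (e i ω) ∂μ := by
      rw [← integral_const_mul]
      refine integral_mono_ae hQF.1
        ((quad_integral μ P (Ecoord i) (Ecoord i)).1.const_mul lam) ?_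
      filter_upwards [hv i] with ω hω
      exact errDyn_quad_le hP.posSemidef hcontr (e i ω) (v i ω) hω
    linarith
  refine ⟨hstep, fun h0 i => ?_⟩
  induction i with
  | zero =>
    have hz : ∫ ω, e 0 ω ⬝ᵥ P.mulVec (e 0 ω) ∂μ = 0 := by
      rw [show (0:ℝ) = ∫ (_ : Ω), (0:ℝ) ∂μ from (integral_zero _ _).symm]
      refine integral_congr_ae ?_
      filter_upwards [h0] with ω hω
      simp [hω]
    rw [hz]
    simp
  | succ i ih =>
    have h1 := hstep i
    have h2 := mul_le_mul_of_nonneg_left ih hlam0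
    have hne : (1 : ℝ) - lam ≠ 0 := by
      intro h
      have : lam = 1 := by linarith
      linarith
    have h3 : lam * ((1 - lam ^ i) / (1 - lam) * (P * W).trace) + (P * W).trace =
        (1 - lam ^ (i + 1)) / (1 - lam) * (P * W).trace := by
      field_simp
      ring
    linarith
end

section
/- Let P ∈ ℝ^{n×n} be symmetric positive definite, λ̂ ∈ [0, 1), W symmetric positive definite, and let (e_{i|k})_{i,k≥0} be a doubly indexed family of square-integrable random vectors in ℝ^n such that: (i) e_{0|0} = 0 almost surely; (ii) for every k and every i, E[e_{i+1|k}^⊤ P e_{i+1|k}] ≤ λ̂ · E[e_{i|k}^⊤ P e_{i|k}] + Tr(PW); and (iii) for every k, E[e_{0|k+1}^⊤ P e_{0|k+1}] ≤ E[e_{1|k}^⊤ P e_{1|k}] (as guaranteed by the interpolated initialization e_{0|k+1} = ξ_{k+1} e_{1|k} with ξ_{k+1} ∈ [0, 1]). Then E[e_{i|k}^⊤ P e_{i|k}] ≤ ((1 − λ̂^{i+k})/(1 − λ̂)) · Tr(PW) for all i, k ≥ 0, and consequently, for every ε ∈ (0, 1), Pr{ e_{i|k}^⊤ P e_{i|k}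 ≤ ((1 − λ̂^{i+k})/(ε(1 − λ̂))) · Tr(PW) } ≥ 1 − ε whenever i + k ≥ 1; i.e., the shifted sets ℛ^ε_{i+k}(λ̂) are probabilistic reachable sets for the closed-loop prediction errors. -/
open Matrix MeasureTheory

lemma aux_trace_nonneg {n : ℕ} {M : Matrix (Fin n) (Fin n) ℝ} (hM : M.PosSemidef) :
    0 ≤ M.trace := by
  rw [Matrix.trace]
  apply Finset.sum_nonneg
  intro i _
  have h := hM.dotProduct_mulVec_nonneg (Pi.single i 1)
  simpa [Matrix.mulVec_single, dotProduct, Pi.single_apply] using h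

open scoped MatrixOrder in
lemma aux_tracePW_nonneg {n : ℕ} {P W : Matrix (Fin n) (Fin n) ℝ}
    (hP : P.PosDef) (hW : W.PosDef) : 0 ≤ (P * W).trace := by
  set C := CFC.sqrt W with hC
  have h1 : P * W = P * (C * C) := by rw [CFC.sqrt_mul_sqrt_self W hW.posSemidef.nonneg]
  have h2 : (P * (C * C)).trace = (Cᴴ * P * C).trace := by
    rw [(CFC.sqrt_nonneg W).posSemidef.1]
    rw [← Matrix.mul_assoc, Matrix.trace_mul_comm, Matrix.mul_assoc]
  rw [h1, h2]
  exact aux_trace_nonneg (hP.posSemidef.conjTranspose_mul_mul_same C)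

lemma aux_integrable_quad {n : ℕ} {Ω : Type*} [MeasurableSpace Ω] (μ : Measure Ω)
    [IsProbabilityMeasure μ]
    (P : Matrix (Fin n) (Fin n) ℝ)
    (f : Ω → Fin n → ℝ)
    (hm : Measurable f) (hL2 : MemLp f 2 μ) :
    Integrable (fun ω => f ω ⬝ᵥ P.mulVec (f ω)) μ := by
  have hcomp : ∀ a : Fin n, MemLp (fun ω => f ω a) 2 μ := by
    intro a
    refine hL2.of_le ((measurable_pi_apply a).comp hm).aestronglyMeasurable ?_
    exact Filter.Eventually.of_forall fun ω => norm_le_pi_norm (f ω) a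
  have hmul : ∀ a b : Fin n, Integrable (fun ω => f ω a * f ω b) μ := by
    intro a b
    rw [← memLp_one_iff_integrable]
    exact MemLp.smul (𝕜 := ℝ) (hcomp b) (hcomp a)
      (hpqr := ⟨by simp [ENNReal.inv_two_add_inv_two]⟩)
  have heq : (fun ω => f ω ⬝ᵥ P.mulVec (f ω)) =
      fun ω => ∑ a : Fin n, ∑ b : Fin n, P a b * (f ω a * f ω b) := by
    funext ω
    simp only [dotProduct, mulVec, Finset.mul_sum]
    exact Finset.sum_congr rfl fun a _ => Finset.sum_congr rfl fun b _ => by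
      ring
  rw [heq]
  exact integrable_finset_sum _ fun a _ =>
    integrable_finset_sum _ fun b _ => (hmul a b).const_mul _

/-- Closed-loop PRS: for a doubly indexed family of square-integrable prediction
errors `e_{i|k}` with `e_{0|0} = 0` a.s., the moment recursion
`E[e_{i+1|k}ᵀ P e_{i+1|k}] ≤ λ̂ E[e_{i|k}ᵀ P e_{i|k}] + Tr(PW)`, and the
initialization property `E[e_{0|k+1}ᵀ P e_{0|k+1}] ≤ E[e_{1|k}ᵀ P e_{1|k}]`,
one has `E[e_{i|k}ᵀ P e_{i|k}] ≤ ((1 − λ̂^{i+k})/(1 − λ̂)) Tr(PW)` for all `i, k`,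
and consequently, for every `ε ∈ (0,1)` and all `i + k ≥ 1`,
`Pr{ e_{i|k}ᵀ P e_{i|k} ≤ ((1 − λ̂^{i+k})/(ε(1 − λ̂))) Tr(PW) } ≥ 1 − ε`. -/
theorem stmt14 {n : ℕ} {Ω : Type*} [MeasurableSpace Ω] (μ : Measure Ω)
    [IsProbabilityMeasure μ]
    (P W : Matrix (Fin n) (Fin n) ℝ) (hP : P.PosDef) (hW : W.PosDef)
    (lam : ℝ) (hlam : lam ∈ Set.Ico (0 : ℝ) 1)
    (e : ℕ → ℕ → Ω → Fin n → ℝ)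
    (heMeas : ∀ i k, Measurable (e i k)) (heL2 : ∀ i k, MemLp (e i k) 2 μ)
    (h00 : ∀ᵐ ω ∂μ, e 0 0 ω = 0)
    (hrec : ∀ i k, ∫ ω, e (i + 1) k ω ⬝ᵥ P.mulVec (e (i + 1) k ω) ∂μ ≤
      lam * ∫ ω, e i k ω ⬝ᵥ P.mulVec (e i k ω) ∂μ + (P * W).trace)
    (hinit : ∀ k, ∫ ω, e 0 (k + 1) ω ⬝ᵥ P.mulVec (e 0 (k + 1) ω) ∂μ ≤
      ∫ ω, e 1 k ω ⬝ᵥ P.mulVec (e 1 k ω) ∂μ) :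
    (∀ i k, ∫ ω, e i k ω ⬝ᵥ P.mulVec (e i k ω) ∂μ ≤
      (1 - lam ^ (i + k)) / (1 - lam) * (P * W).trace) ∧
    (∀ ε : ℝ, ε ∈ Set.Ioo (0 : ℝ) 1 → ∀ i k, 1 ≤ i + k →
      1 - ε ≤ (μ {ω | e i k ω ⬝ᵥ P.mulVec (e i k ω) ≤
        (1 - lam ^ (i + k)) / (ε * (1 - lam)) * (P * W).trace}).toReal) := by
  obtain ⟨hlam0, hlam1⟩ := hlam
  have hlamne : (1 : ℝ) - lam ≠ 0 := by linarith
  have hlampos : (0 : ℝ) < 1 - lam := by linarith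
  set T : ℝ := (P * W).trace with hT
  have hTnn : 0 ≤ T := aux_tracePW_nonneg hP hW
  set m : ℕ → ℕ → ℝ := fun i k => ∫ ω, e i k ω ⬝ᵥ P.mulVec (e i k ω) ∂μ with hm
  set B : ℕ → ℝ := fun j => (1 - lam ^ j) / (1 - lam) * T with hB
  -- pointwise nonnegativity of the quadratic form
  have hQnn : ∀ i k ω, 0 ≤ e i k ω ⬝ᵥ P.mulVec (e i k ω) := by
    intro i k ω
    have := hP.posSemidef.dotProduct_mulVec_nonneg (e i k ω)
    simpa using this
  have hQint : ∀ i k, Integrable (fun ω => e i k ω ⬝ᵥ P.mulVec (e i k ω)) μ :=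
    fun i k => aux_integrable_quad μ P (e i k) (heMeas i k) (heL2 i k)
  -- step identity on the bound sequence
  have hBstep : ∀ j : ℕ, lam * B j + T = B (j + 1) := by
    intro j
    simp only [hB]
    rw [pow_succ]
    field_simp
    ring
  -- initial value
  have hm00 : m 0 0 = 0 := by
    simp only [hm]
    rw [integral_congr_ae (g := fun _ => (0 : ℝ))]
    · simp
    · filter_upwards [h00] with ω hω
      simp [hω]
  -- the key moment bound, by induction on i + k
  have key : ∀ j i k, i + k = j → m i k ≤ B j := by
    intro j
    induction j with
    | zero =>
      intro i k hik
      obtain ⟨hi, hk⟩ := Nat.add_eq_zero.mp hik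
      subst hi; subst hk
      simp [hm00, hB]
    | succ j ih =>
      intro i k hik
      cases i with
      | zero =>
        have hk : k = j + 1 := by omega
        subst hk
        calc m 0 (j + 1) ≤ m 1 j := hinit j
          _ ≤ lam * m 0 j + T := hrec 0 j
          _ ≤ lam * B j + T := by
              have := ih 0 j (Nat.zero_add j)
              nlinarith
          _ = B (j + 1) := hBstep j
      | succ i' =>
        have hik' : i' + k = j := by omega
        calc m (i' + 1) k ≤ lam * m i' k + T := hrec i' k
          _ ≤ lam * B j + T := by
              have := ih i' k hik'
              nlinarith
          _ = B (j + 1) := hBstep j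
  constructor
  · intro i k
    exact key (i + k) i k rfl
  · intro ε hε i k hik
    obtain ⟨hε0, hε1⟩ := hε
    set j := i + k with hj
    set a : ℝ := (1 - lam ^ j) / (ε * (1 - lam)) * T with ha
    have hlamj : lam ^ j < 1 := pow_lt_one₀ hlam0 hlam1 (by omega)
    have hcoef : 0 < (1 - lam ^ j) / (ε * (1 - lam)) := by
      apply div_pos (by linarith) (by positivity)
    have hεa : ε * a = B j := by
      simp only [ha, hB]
      field_simp
    have hmB : m i k ≤ B j := key j i k rfl
    set S := {ω | e i k ω ⬝ᵥ P.mulVec (e i k ω) ≤ a} with hS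
    have hQmeas : Measurable (fun ω => e i k ω ⬝ᵥ P.mulVec (e i k ω)) := by
      simp only [dotProduct, mulVec]
      exact Finset.measurable_sum _ fun a _ =>
        ((measurable_pi_apply a).comp (heMeas i k)).mul
          (Finset.measurable_sum _ fun b _ =>
            measurable_const.mul ((measurable_pi_apply b).comp (heMeas i k)))
    have hSmeas : MeasurableSet S := hQmeas measurableSet_Iic
    have hsum : (μ S).toReal + (μ Sᶜ).toReal = 1 := by
      rw [← ENNReal.toReal_add (measure_ne_top μ _) (measure_ne_top μ _),
        measure_add_measure_compl hSmeas]
      simp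
    have hScnn : (μ Sᶜ).toReal ≤ ε := by
      rcases eq_or_lt_of_le hTnn with hT0 | hT0
      · -- trace is zero: the quadratic form vanishes a.e.
        have ha0 : a = 0 := by simp [ha, ← hT0]
        have hint0 : ∫ ω, e i k ω ⬝ᵥ P.mulVec (e i k ω) ∂μ = 0 := by
          have h1 : m i k ≤ 0 := by
            have := hmB
            simp only [hB, ← hT0, mul_zero] at this
            exact this
          have h2 : 0 ≤ m i k := integral_nonneg fun ω => hQnn i k ω
          have : m i k = 0 := le_antisymm h1 h2
          simpa [hm] using this
        have hae : ∀ᵐ ω ∂μ, e i k ω ⬝ᵥ P.mulVec (e i k ω) = 0 :=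
          ((integral_eq_zero_iff_of_nonneg (fun ω => hQnn i k ω) (hQint i k)).mp hint0)
        have hSc0 : μ Sᶜ = 0 := by
          have hsub : Sᶜ ⊆ {ω | ¬ (e i k ω ⬝ᵥ P.mulVec (e i k ω) = 0)} := by
            intro ω hω hzero
            exact hω (by simp [hS, hzero, ha0])
          exact measure_mono_null hsub (ae_iff.mp hae)
        simp [hSc0]
        linarith
      · -- trace positive: Markov's inequality
        have hapos : 0 < a := by
          simp only [ha]
          exact mul_pos hcoef hT0
        have hmarkov := mul_meas_ge_le_integral_of_nonneg
          (Filter.Eventually.of_forall fun ω => hQnn i k ω) (hQint i k) a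
        have hge : a * (μ {ω | a ≤ e i k ω ⬝ᵥ P.mulVec (e i k ω)}).toReal ≤ ε * a := by
          calc a * (μ {ω | a ≤ e i k ω ⬝ᵥ P.mulVec (e i k ω)}).toReal
              ≤ ∫ ω, e i k ω ⬝ᵥ P.mulVec (e i k ω) ∂μ := hmarkov
            _ ≤ B j := hmB
            _ = ε * a := hεa.symm
        have hge' : (μ {ω | a ≤ e i k ω ⬝ᵥ P.mulVec (e i k ω)}).toReal ≤ ε := by
          have := hge
          rw [mul_comm ε a] at this
          exact le_of_mul_le_mul_left this hapos
        have hsub : Sᶜ ⊆ {ω | a ≤ e i k ω ⬝ᵥ P.mulVec (e i k ω)} := by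
          intro ω hω
          simp only [hS, Set.mem_compl_iff, Set.mem_setOf_eq, not_le] at hω
          exact le_of_lt hω
        calc (μ Sᶜ).toReal
            ≤ (μ {ω | a ≤ e i k ω ⬝ᵥ P.mulVec (e i k ω)}).toReal :=
              ENNReal.toReal_mono (measure_ne_top μ _) (measure_mono hsub)
          _ ≤ ε := hge'
    linarith
end
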